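/- If f : ℬ → 𝒞 assigns maximal cliques to branching points of a tree T such that a T-representation of a graph G exists with b ∈ ⋂_{v∈f(b)} V(T'_v) for all b, and f(b) = f(b') for two branching points b, b', then f(b'') = f(b) for every branching point b'' on the path from b to b' in T; consequently, for each clique C ∈ f(ℬ), the preimage f⁻¹(C) induces a subtree of T. -/

import Mathlib

variable {V : Type}

/-- Neighbourhood of a vertex `u` inside a set `C`. -/
def nbhdIn (G : SimpleGraph V) (C : Set V) (u : V) : Set V := {v ∈ C | G.Adj u v}

/-- Neighbourhood of a set `X` inside `C`. -/
def nbhdSet (G : SimpleGraph V) (C : Set V) (X : Set V) : Set V := ⋃ u ∈ X, nbhdIn G C u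

/-- The relation `X ▷ X'`. -/
def Dominates (G : SimpleGraph V) (C : Set V) (X X' : Set V) : Prop :=
  ∀ u ∈ X, nbhdSet G C X' ⊆ nbhdIn G C u

/-- `X` is (the vertex set of) a connected component of `G - C`. -/
def IsCompOf (G : SimpleGraph V) (C : Set V) (X : Set V) : Prop :=
  ∃ c : (G.induce (Cᶜ : Set V)).ConnectedComponent, X = Subtype.val '' c.supp

/-- Two components are equivalent: all their vertices have the same neighbourhood `C' ⊆ C`. -/
def CompEquiv (G : SimpleGraph V) (C : Set V) (X X' : Set V) : Prop :=
  ∃ C' ⊆ C, (∀ u ∈ X, nbhdIn G C u = C') ∧ (∀ u ∈ X', nbhdIn G C u = C')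


/-- A subtree of a tree `T`: a nonempty set of vertices inducing a connected subgraph. -/
def IsSubtree {W : Type} (T : SimpleGraph W) (S : Set W) : Prop :=
  S.Nonempty ∧ (T.induce S).Connected

/-- `R` is a representation of `G` by subtrees of the tree `T`: each vertex gets a subtree,
and distinct vertices are adjacent iff their subtrees intersect. -/
def TreeRep {V W : Type} (G : SimpleGraph V) (T : SimpleGraph W) (R : V → Set W) : Prop :=
  (∀ v, IsSubtree T (R v)) ∧ ∀ u v, u ≠ v → (G.Adj u v ↔ (R u ∩ R v).Nonempty)

/-- `T'` is a subdivision of `T` witnessed by the embedding `f` of branch vertices and the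
family `P` of paths replacing the edges: the paths are internally disjoint from each other
and from the branch vertices, and they cover all of `T'`. -/
def IsSubdivisionPaths {W W' : Type} (T : SimpleGraph W) (T' : SimpleGraph W')
    (f : W → W') (P : ∀ u v, T.Adj u v → T'.Walk (f u) (f v)) : Prop :=
  Function.Injective f ∧
  (∀ u v (h : T.Adj u v), (P u v h).IsPath) ∧
  (∀ u v (h : T.Adj u v) (w : W), f w ∈ (P u v h).support → w = u ∨ w = v) ∧
  (∀ u v (h : T.Adj u v) u' v' (h' : T.Adj u' v'), s(u, v) ≠ s(u', v') →
    ∀ x : W', x ∈ (P u v h).support → x ∈ (P u' v' h').support → x ∈ Set.range f) ∧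
  (∀ x : W', x ∈ Set.range f ∨ ∃ (u v : W) (h : T.Adj u v), x ∈ (P u v h).support) ∧
  (∀ e ∈ T'.edgeSet, ∃ (u v : W) (h : T.Adj u v), e ∈ (P u v h).edges)

def IsSubdivisionWith {W W' : Type} (T : SimpleGraph W) (T' : SimpleGraph W')
    (f : W → W') : Prop :=
  ∃ P : (∀ u v, T.Adj u v → T'.Walk (f u) (f v)), IsSubdivisionPaths T T' f P

def IsSubdivision {W W' : Type} (T : SimpleGraph W) (T' : SimpleGraph W') : Prop :=
  ∃ f : W → W', IsSubdivisionWith T T' f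

/-- A graph is chordal if every cycle of length at least 4 has a chord. -/
def IsChordal {V : Type} (G : SimpleGraph V) : Prop :=
  ∀ (v : V) (c : G.Walk v v), c.IsCycle → 4 ≤ c.length →
    ∃ u w : V, u ∈ c.support ∧ w ∈ c.support ∧ G.Adj u w ∧ s(u, w) ∉ c.edges

/-- `C` is a maximal clique of `G`. -/
def IsMaxClique (G : SimpleGraph V) (C : Set V) : Prop :=
  G.IsClique C ∧ ∀ D, G.IsClique D → C ⊆ D → C = D

section Aux
variable {W W' : Type}

open SimpleGraph

/-- Separation: if `b''` lies on the (unique) path `p` from `b` to `b'` in the tree `T`,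
and `b'' ≠ b, b'`, then every walk in `T'` from `f b` to `f b'` passes through `f b''`. -/
lemma tree_sep (T : SimpleGraph W) (hT : T.IsTree) (T' : SimpleGraph W')
    (f : W → W') (P : ∀ u v, T.Adj u v → T'.Walk (f u) (f v))
    (hP : IsSubdivisionPaths T T' f P)
    {b b' b'' : W} (p : T.Walk b b') (hp : p.IsPath) (hb'' : b'' ∈ p.support)
    (hne : b'' ≠ b) (hne' : b'' ≠ b')
    (q : T'.Walk (f b) (f b')) : f b'' ∈ q.support := by
  classical
  obtain ⟨hinj, hpath, hbranch, hdisj, hcover, hedge⟩ := hP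
  -- the set of vertices of `T` reachable from `b` avoiding `b''`
  set A : Set W := {w | ∃ r : T.Walk b w, b'' ∉ r.support} with hA
  have hbA : b ∈ A := ⟨SimpleGraph.Walk.nil, by simpa using hne⟩
  have hclosure : ∀ w ∈ A, ∀ w', T.Adj w w' → w' ≠ b'' → w' ∈ A := by
    rintro w ⟨r, hr⟩ w' hadj hw'
    exact ⟨r.concat hadj, by
      rw [SimpleGraph.Walk.support_concat, List.mem_append]
      rintro (h | h)
      · exact hr h
      · simp at h; exact hw' h.symm⟩
  have hb'A : b' ∉ A := by
    rintro ⟨r, hr⟩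
    have h1 : p = (r.toPath : T.Walk b b') :=
      (hT.existsUnique_path b b').unique hp (r.toPath.2)
    have : b'' ∈ (r.toPath : T.Walk b b').support := h1 ▸ hb''
    exact hr (r.support_toPath_subset this)
  have hb''A : b'' ∉ A := by rintro ⟨r, hr⟩; exact hr r.end_mem_support
  -- the "side" invariant
  set Aside : W' → Prop := fun x => x ≠ f b'' ∧
    ((∃ w ∈ A, f w = x) ∨
      ∃ u v, ∃ h : T.Adj u v, x ∈ (P u v h).support ∧ (u ∈ A ∨ v ∈ A)) with hAside
  have hfb : Aside (f b) := ⟨fun h => hne (hinj h.symm), Or.inl ⟨b, hbA, rfl⟩⟩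
  -- the step lemma
  have hstep : ∀ x y, T'.Adj x y → Aside x → y ≠ f b'' → Aside y := by
    rintro x y hadj ⟨hxne, hx⟩ hy
    obtain ⟨u, v, h, he⟩ := hedge s(x, y) hadj
    have hxs : x ∈ (P u v h).support := (P u v h).fst_mem_support_of_mem_edges he
    have hys : y ∈ (P u v h).support := (P u v h).snd_mem_support_of_mem_edges he
    refine ⟨hy, Or.inr ⟨u, v, h, hys, ?_⟩⟩
    -- show `u ∈ A ∨ v ∈ A`
    rcases hx with ⟨w, hw, rfl⟩ | ⟨u', v', h', hx', hA'⟩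
    · rcases hbranch u v h w hxs with rfl | rfl
      · exact Or.inl hw
      · exact Or.inr hw
    · by_cases hss : s(u, v) = s(u', v')
      · rcases Sym2.eq_iff.mp hss with ⟨rfl, rfl⟩ | ⟨rfl, rfl⟩
        · exact hA'
        · exact hA'.symm
      · obtain ⟨w, rfl⟩ := hdisj u v h u' v' h' hss x hxs hx'
        have hwb : w ≠ b'' := fun hh => hxne (by rw [hh])
        have hwA : w ∈ A := by
          rcases hbranch u' v' h' w hx' with rfl | rfl
          · rcases hA' with hA' | hA'
            · exact hA'
            · exact hclosure v' hA' w h'.symm hwb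
          · rcases hA' with hA' | hA'
            · exact hclosure u' hA' w h' hwb
            · exact hA'
        rcases hbranch u v h w hxs with rfl | rfl
        · exact Or.inl hwA
        · exact Or.inr hwA
  -- `Aside (f b')` is absurd
  have hfinal : ¬ Aside (f b') := by
    rintro ⟨_, ⟨w, hw, hfw⟩ | ⟨u, v, h, hs, hA'⟩⟩
    · exact hb'A (hinj hfw ▸ hw)
    · rcases hbranch u v h b' hs with rfl | rfl
      · rcases hA' with hA' | hA'
        · exact hb'A hA'
        · exact hb'A (hclosure v hA' b' h.symm (Ne.symm hne'))
      · rcases hA' with hA' | hA'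
        · exact hb'A (hclosure u hA' b' h (Ne.symm hne'))
        · exact hb'A hA'
  -- conclude by induction along `q`
  by_contra hq
  apply hfinal
  have : ∀ (x y : W') (r : T'.Walk x y), Aside x → f b'' ∉ r.support → Aside y := by
    intro x y r
    induction r with
    | nil => intro hx _; exact hx
    | cons hadj r ih =>
      intro hx hr
      rw [SimpleGraph.Walk.support_cons, List.mem_cons] at hr
      push_neg at hr
      exact ih (hstep _ _ hadj hx (fun hh => hr.2 (hh ▸ r.start_mem_support))) hr.2
  exact this _ _ q hfb hq

/-- Membership version for subtrees. -/
lemma subtree_mem (T : SimpleGraph W) (hT : T.IsTree) (T' : SimpleGraph W')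
    (f : W → W') (hsub : IsSubdivisionWith T T' f)
    {b b' b'' : W} (p : T.Walk b b') (hp : p.IsPath) (hb'' : b'' ∈ p.support)
    (hne : b'' ≠ b) (hne' : b'' ≠ b')
    (S : Set W') (hS : IsSubtree T' S) (hb : f b ∈ S) (hb' : f b' ∈ S) :
    f b'' ∈ S := by
  obtain ⟨P, hP⟩ := hsub
  obtain ⟨hS1, hS2⟩ := hS
  obtain ⟨q0⟩ := hS2.preconnected ⟨f b, hb⟩ ⟨f b', hb'⟩
  let hom : T'.induce S →g T' := ⟨Subtype.val, fun h => h⟩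
  have hmem := tree_sep T hT T' f P hP p hp hb'' hne hne' (q0.map hom)
  rw [SimpleGraph.Walk.support_map, List.mem_map] at hmem
  obtain ⟨⟨x, hx⟩, _, rfl⟩ := hmem
  exact hx

end Aux

/-- If a valid clique assignment `cl` on branching points gives equal cliques on `b` and
`b'`, then every branching point on the path from `b` to `b'` receives the same clique;
consequently every preimage `cl⁻¹(C)` is closed under taking branching points on paths,
i.e. induces a subtree of `T`. -/
theorem clique_assignment_subtree {W W' : Type} [Fintype V] [Fintype W] [Fintype W']
    (T : SimpleGraph W) (hT : T.IsTree)
    (T' : SimpleGraph W') (f : W → W') (hsub : IsSubdivisionWith T T' f)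
    (G : SimpleGraph V) (R : V → Set W') (hrep : TreeRep G T' R)
    (cl : W → Set V)
    (hcl : ∀ b : W, 3 ≤ (T.neighborSet b).ncard →
      IsMaxClique G (cl b) ∧ ∀ v ∈ cl b, f b ∈ R v) :
    (∀ b b' : W, 3 ≤ (T.neighborSet b).ncard → 3 ≤ (T.neighborSet b').ncard →
      cl b = cl b' → ∀ (p : T.Walk b b'), p.IsPath →
        ∀ b'' ∈ p.support, 3 ≤ (T.neighborSet b'').ncard → cl b'' = cl b) ∧
    (∀ C₀ : Set V, ∀ b b' : W, 3 ≤ (T.neighborSet b).ncard →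
      3 ≤ (T.neighborSet b').ncard → cl b = C₀ → cl b' = C₀ →
      ∀ (p : T.Walk b b'), p.IsPath →
        ∀ b'' ∈ p.support, 3 ≤ (T.neighborSet b'').ncard → cl b'' = C₀) := by
  
  obtain ⟨hrep1, hrep2⟩ := hrep
  have main : ∀ b b' : W, 3 ≤ (T.neighborSet b).ncard → 3 ≤ (T.neighborSet b').ncard →
      cl b = cl b' → ∀ (p : T.Walk b b'), p.IsPath →
        ∀ b'' ∈ p.support, 3 ≤ (T.neighborSet b'').ncard → cl b'' = cl b := by
    intro b b' hb hb' heq p hp b'' hbs hb''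
    by_cases h1 : b'' = b
    · rw [h1]
    by_cases h2 : b'' = b'
    · rw [h2, heq]
    have key : ∀ v ∈ cl b, f b'' ∈ R v := by
      intro v hv
      exact subtree_mem T hT T' f hsub p hp hbs h1 h2 (R v) (hrep1 v)
        ((hcl b hb).2 v hv) ((hcl b' hb').2 v (heq ▸ hv))
    have key'' : ∀ v ∈ cl b'', f b'' ∈ R v := (hcl b'' hb'').2
    have hclique : G.IsClique (cl b ∪ cl b'') := by
      intro x hx y hy hxy
      rcases hx with hx | hx <;> rcases hy with hy | hy
      · exact (hcl b hb).1.1 hx hy hxy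
      · exact (hrep2 x y hxy).mpr ⟨f b'', key x hx, key'' y hy⟩
      · exact (hrep2 x y hxy).mpr ⟨f b'', key'' x hx, key y hy⟩
      · exact (hcl b'' hb'').1.1 hx hy hxy
    have e1 : cl b = cl b ∪ cl b'' := (hcl b hb).1.2 _ hclique Set.subset_union_left
    have e2 : cl b'' = cl b ∪ cl b'' := (hcl b'' hb'').1.2 _ hclique Set.subset_union_right
    rw [e2, ← e1]
  refine ⟨main, fun C₀ b b' hb hb' h1 h2 p hp b'' hs hb'' => ?_⟩
  rw [main b b' hb hb' (h1.trans h2.symm) p hp b'' hs hb'', h1]
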